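/- Let n = k² be a perfect square with n > 9. In the lollipop graph L_n, the price of fairness at target fairness level α = 1 satisfies PoF(L_n, 1) > 1 − 2/(√n − 1). -/

import Mathlib

open Finset

/-- Number of edges of `G` with both endpoints in `S`. -/
def edgesIn {V : Type*} [Fintype V] [DecidableEq V] (G : SimpleGraph V)
    [DecidableRel G.Adj] (S : Finset V) : ℕ :=
  (G.edgeFinset.filter (fun e => ∀ v ∈ e, v ∈ S)).card

/-- Density `ρ(S) = 2 e(S) / |S|` of the subgraph induced by `S`. -/
noncomputable def rho {V : Type*} [Fintype V] [DecidableEq V] (G : SimpleGraph V)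
    [DecidableRel G.Adj] (S : Finset V) : ℝ :=
  2 * (edgesIn G S : ℝ) / S.card

/-- Fairness regularizer `r1(S) = |S ∩ Sp| / |S|`. -/
noncomputable def r1 {V : Type*} [DecidableEq V] (Sp S : Finset V) : ℝ :=
  ((S ∩ Sp).card : ℝ) / S.card

/-- The lollipop graph `L_n` on `n = k²` vertices: vertices `0, …, k-1` form a
clique (the unprotected vertices), vertices `k, …, k²-1` form a path (the
protected vertices), and one endpoint of the path (vertex `k`) is joined to
one vertex of the clique (vertex `k-1`). -/
def lollipop (k : ℕ) : SimpleGraph (Fin (k * k)) where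
  Adj u v := u ≠ v ∧ ((u.val < k ∧ v.val < k) ∨
      (u.val + 1 = v.val ∧ k ≤ v.val) ∨ (v.val + 1 = u.val ∧ k ≤ u.val))
  symm := by
    constructor
    intro u v h
    refine ⟨Ne.symm h.1, ?_⟩
    rcases h.2 with h | h | h
    · exact Or.inl ⟨h.2, h.1⟩
    · exact Or.inr (Or.inr h)
    · exact Or.inr (Or.inl h)
  loopless := by constructor; intro v h; exact h.1 rfl

instance lollipopDecAdj (k : ℕ) : DecidableRel (lollipop k).Adj :=
  fun _ _ => inferInstanceAs (Decidable (_ ∧ _))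

/-- The protected subset of the lollipop graph: the vertices of the path. -/
def lollipopProtected (k : ℕ) : Finset (Fin (k * k)) :=
  Finset.univ.filter (fun v => k ≤ v.val)

/-- The vertex set of the clique `C_√n` in the lollipop graph. -/
def lollipopClique (k : ℕ) : Finset (Fin (k * k)) :=
  Finset.univ.filter (fun v => v.val < k)

/-- Density of the densest subgraph: `ρ*_G = max_{∅ ≠ S ⊆ V} ρ(S)`. -/
noncomputable def rhoStar {V : Type*} [Fintype V] [DecidableEq V] (G : SimpleGraph V)
    [DecidableRel G.Adj] : ℝ :=
  sSup {x : ℝ | ∃ S : Finset V, S.Nonempty ∧ rho G S = x}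

/-- Density of the densest subgraph at fairness level `α`:
`ρ*_G(α) = max {ρ(S) : ∅ ≠ S ⊆ V, r1(S) = α}`. -/
noncomputable def rhoStarAlpha {V : Type*} [Fintype V] [DecidableEq V] (G : SimpleGraph V)
    [DecidableRel G.Adj] (Sp : Finset V) (α : ℝ) : ℝ :=
  sSup {x : ℝ | ∃ S : Finset V, S.Nonempty ∧ r1 Sp S = α ∧ rho G S = x}

/-- Price of fairness `PoF(G, α) = 1 - ρ*_G(α) / ρ*_G`. -/
noncomputable def PoF {V : Type*} [Fintype V] [DecidableEq V] (G : SimpleGraph V)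
    [DecidableRel G.Adj] (Sp : Finset V) (α : ℝ) : ℝ :=
  1 - rhoStarAlpha G Sp α / rhoStar G

section Aux

variable (k : ℕ)

lemma clique_eq (hk : 1 ≤ k) :
    lollipopClique k = Finset.univ.map (Fin.castLEEmb (Nat.le_mul_of_pos_left k (by omega))) := by
  ext v
  simp only [lollipopClique, Finset.mem_filter, Finset.mem_univ, true_and, Finset.mem_map,
    Fin.castLEEmb, Function.Embedding.coeFn_mk]
  constructor
  · intro hv
    exact ⟨⟨v.val, hv⟩, Fin.ext rfl⟩
  · rintro ⟨a, rfl⟩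
    exact a.isLt

lemma clique_card (hk : 1 ≤ k) : (lollipopClique k).card = k := by
  rw [clique_eq k hk, Finset.card_map, Finset.card_univ, Fintype.card_fin]

lemma edgesIn_clique (hk : 1 ≤ k) :
    edgesIn (lollipop k) (lollipopClique k) = k.choose 2 := by
  have hkk : k ≤ k * k := Nat.le_mul_of_pos_left k (by omega)
  have hk0 : 0 < k := by omega
  rw [edgesIn, show k.choose 2 = ((⊤ : SimpleGraph (Fin k)).edgeFinset).card by
    rw [SimpleGraph.card_edgeFinset_top_eq_card_choose_two, Fintype.card_fin]]
  set down : Fin (k * k) → Fin k := fun v => if h : v.val < k then ⟨v.val, h⟩ else ⟨0, hk0⟩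
    with hdown
  refine Finset.card_nbij' (Sym2.map down) (Sym2.map (Fin.castLE hkk)) ?_ ?_ ?_ ?_
  · intro e
    refine Sym2.inductionOn e ?_
    intro u v he
    simp only [Finset.mem_coe, Finset.mem_filter, SimpleGraph.mem_edgeFinset, SimpleGraph.mem_edgeSet] at he
    obtain ⟨hadj, hmem⟩ := he
    have hu : u ∈ lollipopClique k := hmem u (by simp)
    have hv : v ∈ lollipopClique k := hmem v (by simp)
    rw [lollipopClique, Finset.mem_filter] at hu hv
    rw [Sym2.map_pair_eq, Finset.mem_coe, SimpleGraph.mem_edgeFinset, SimpleGraph.mem_edgeSet,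
      SimpleGraph.top_adj]
    intro h
    have hval : (down u).val = (down v).val := congrArg Fin.val h
    rw [hdown] at hval
    simp only [hu.2, hv.2, dif_pos] at hval
    exact hadj.1 (Fin.ext hval)
  · intro e
    refine Sym2.inductionOn e ?_
    intro a b he
    rw [Finset.mem_coe, SimpleGraph.mem_edgeFinset, SimpleGraph.mem_edgeSet, SimpleGraph.top_adj] at he
    rw [Sym2.map_pair_eq]
    simp only [Finset.mem_coe, Finset.mem_filter, SimpleGraph.mem_edgeFinset, SimpleGraph.mem_edgeSet]
    have hab : (Fin.castLE hkk a : Fin (k * k)) ≠ Fin.castLE hkk b := by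
      intro h
      have hval := congrArg Fin.val h
      exact he (Fin.ext hval)
    refine ⟨⟨hab, Or.inl ⟨a.isLt, b.isLt⟩⟩, ?_⟩
    intro w hw
    rw [Sym2.mem_iff] at hw
    rcases hw with rfl | rfl <;>
      simp [lollipopClique, Fin.castLE, a.isLt, b.isLt]
  · intro e he
    simp only [Finset.mem_coe, Finset.mem_filter] at he
    obtain ⟨-, hmem⟩ := he
    revert hmem
    refine Sym2.inductionOn e ?_
    intro u v hmem
    have hu : u ∈ lollipopClique k := hmem u (by simp)
    have hv : v ∈ lollipopClique k := hmem v (by simp)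
    rw [lollipopClique, Finset.mem_filter] at hu hv
    rw [Sym2.map_pair_eq, Sym2.map_pair_eq]
    have hdu : down u = ⟨u.val, hu.2⟩ := by simp only [hdown]; rw [dif_pos hu.2]
    have hdv : down v = ⟨v.val, hv.2⟩ := by simp only [hdown]; rw [dif_pos hv.2]
    have h1 : Fin.castLE hkk (down u) = u := by rw [hdu]; exact Fin.ext rfl
    have h2 : Fin.castLE hkk (down v) = v := by rw [hdv]; exact Fin.ext rfl
    rw [h1, h2]
  · intro e he
    revert he
    refine Sym2.inductionOn e ?_
    intro a b _
    rw [Sym2.map_pair_eq, Sym2.map_pair_eq]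
    have h1 : ∀ a : Fin k, down (Fin.castLE hkk a) = a := by
      intro a
      simp only [hdown]
      rw [dif_pos (show (Fin.castLE hkk a).val < k from a.isLt)]
      exact Fin.ext rfl
    rw [h1 a, h1 b]

lemma rho_clique (hk : 2 ≤ k) : rho (lollipop k) (lollipopClique k) = (k : ℝ) - 1 := by
  have h2 : 2 * k.choose 2 = k * (k - 1) := by
    rw [Nat.choose_two_right, Nat.two_mul_div_two_of_even (Nat.even_mul_pred_self k)]
  have hk0 : (k : ℝ) ≠ 0 := by positivity
  rw [rho, edgesIn_clique k (by omega), clique_card k (by omega), div_eq_iff hk0]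
  have h3 : ((2 * k.choose 2 : ℕ) : ℝ) = (k : ℝ) * ((k : ℝ) - 1) := by
    rw [h2]
    push_cast [Nat.cast_sub (by omega : 1 ≤ k)]
    ring
  push_cast at h3 ⊢
  linarith

lemma rhoStar_lb (hk : 2 ≤ k) : (k : ℝ) - 1 ≤ rhoStar (lollipop k) := by
  have hfin : {x : ℝ | ∃ S : Finset (Fin (k * k)), S.Nonempty ∧ rho (lollipop k) S = x}.Finite := by
    apply (Set.finite_range (rho (lollipop k))).subset
    rintro x ⟨S, _, rfl⟩
    exact ⟨S, rfl⟩
  refine le_csSup hfin.bddAbove ⟨lollipopClique k, ?_, rho_clique k hk⟩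
  rw [← Finset.card_pos, clique_card k (by omega)]
  omega

lemma subset_protected_of_r1 (S : Finset (Fin (k * k))) (hS : S.Nonempty)
    (h1 : r1 (lollipopProtected k) S = 1) : S ⊆ lollipopProtected k := by
  have hc : (0 : ℝ) < S.card := by exact_mod_cast Finset.card_pos.2 hS
  rw [r1, div_eq_one_iff_eq (by positivity)] at h1
  have hcard : (S ∩ lollipopProtected k).card = S.card := by exact_mod_cast h1
  have := Finset.eq_of_subset_of_card_le (Finset.inter_subset_left)
    (le_of_eq hcard.symm)
  rw [Finset.inter_eq_left] at this
  exact this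

lemma edgesIn_path (S : Finset (Fin (k * k))) (hS : S.Nonempty)
    (hsub : S ⊆ lollipopProtected k) : edgesIn (lollipop k) S ≤ S.card - 1 := by
  let f : Sym2 (Fin (k * k)) → Fin (k * k) :=
    Sym2.lift ⟨fun a b => min a b, fun a b => min_comm a b⟩
  have key : ∀ e ∈ (lollipop k).edgeSet, (∀ v ∈ e, v ∈ S) →
      ∃ u v : Fin (k * k), e = s(u, v) ∧ u.val + 1 = v.val ∧ u ∈ S ∧ v ∈ S := by
    intro e
    refine Sym2.inductionOn e ?_
    intro u v hadj hmem
    rw [SimpleGraph.mem_edgeSet] at hadj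
    have hu : u ∈ S := hmem u (by simp)
    have hv : v ∈ S := hmem v (by simp)
    have hku : k ≤ u.val := (Finset.mem_filter.1 (hsub hu)).2
    have hkv : k ≤ v.val := (Finset.mem_filter.1 (hsub hv)).2
    rcases hadj.2 with h | h | h
    · omega
    · exact ⟨u, v, rfl, h.1, hu, hv⟩
    · exact ⟨v, u, Sym2.eq_swap, h.1, hv, hu⟩
  have hfval : ∀ (u v : Fin (k * k)), u.val + 1 = v.val → f s(u, v) = u := by
    intro u v h
    have : u ≤ v := by rw [Fin.le_def]; omega
    simp only [f, Sym2.lift_mk]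
    exact min_eq_left this
  rw [edgesIn]
  refine le_trans
    (Finset.card_le_card_of_injOn (t := S.erase (S.max' hS)) f ?_ ?_)
    (le_of_eq (Finset.card_erase_of_mem (S.max'_mem hS)))
  · intro e he
    simp only [Finset.mem_coe, Finset.mem_filter, SimpleGraph.mem_edgeFinset] at he
    obtain ⟨u, v, rfl, huv, hu, hv⟩ := key e he.1 he.2
    rw [hfval u v huv]
    refine Finset.mem_erase.2 ⟨?_, hu⟩
    intro h
    have hle : v ≤ S.max' hS := S.le_max' v hv
    rw [← h, Fin.le_def] at hle
    omega
  · intro e1 h1 e2 h2 heq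
    simp only [Finset.coe_filter, Set.mem_setOf_eq, SimpleGraph.mem_edgeFinset] at h1 h2
    obtain ⟨u1, v1, rfl, h11, _, _⟩ := key e1 h1.1 h1.2
    obtain ⟨u2, v2, rfl, h21, _, _⟩ := key e2 h2.1 h2.2
    rw [hfval u1 v1 h11, hfval u2 v2 h21] at heq
    subst heq
    have : v1 = v2 := Fin.ext (by omega)
    rw [this]

lemma rho_path (S : Finset (Fin (k * k))) (hS : S.Nonempty)
    (hsub : S ⊆ lollipopProtected k) : rho (lollipop k) S < 2 := by
  have hc : 1 ≤ S.card := Finset.card_pos.2 hS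
  have hcR : (0 : ℝ) < S.card := by exact_mod_cast hc
  have he : (edgesIn (lollipop k) S : ℝ) ≤ (S.card : ℝ) - 1 := by
    have := edgesIn_path k S hS hsub
    have : (edgesIn (lollipop k) S : ℝ) ≤ ((S.card - 1 : ℕ) : ℝ) := by exact_mod_cast this
    rwa [Nat.cast_sub hc, Nat.cast_one] at this
  rw [rho, div_lt_iff₀ hcR]
  linarith

lemma rhoStarAlpha_bounds :
    0 ≤ rhoStarAlpha (lollipop k) (lollipopProtected k) 1 ∧
      rhoStarAlpha (lollipop k) (lollipopProtected k) 1 < 2 := by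
  set A := {x : ℝ | ∃ S : Finset (Fin (k * k)), S.Nonempty ∧
      r1 (lollipopProtected k) S = 1 ∧ rho (lollipop k) S = x} with hA
  have hfin : A.Finite := by
    apply (Set.finite_range (rho (lollipop k))).subset
    rintro x ⟨S, _, _, rfl⟩
    exact ⟨S, rfl⟩
  rcases Set.eq_empty_or_nonempty A with hemp | hne
  · have : rhoStarAlpha (lollipop k) (lollipopProtected k) 1 = 0 := by
      rw [rhoStarAlpha, ← hA, hemp, Real.sSup_empty]
    rw [this]; norm_num
  · have hmem : sSup A ∈ A := hne.csSup_mem hfin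
    obtain ⟨S, hS, h1, hrho⟩ := hmem
    have hsub := subset_protected_of_r1 k S hS h1
    have heq : rhoStarAlpha (lollipop k) (lollipopProtected k) 1 = rho (lollipop k) S := by
      rw [rhoStarAlpha, ← hA, hrho]
    constructor
    · rw [heq, rho]; positivity
    · rw [heq]; exact rho_path k S hS hsub

end Aux


/-- For a perfect square `n = k² > 9`, the price of fairness of the
lollipop graph `L_n` at target fairness level `α = 1` satisfies
`PoF(L_n, 1) > 1 - 2/(√n - 1)`. -/
theorem stmt7 (k : ℕ) (hk : 2 ≤ k) (hn : 9 < k * k) :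
    1 - 2 / ((k : ℝ) - 1) < PoF (lollipop k) (lollipopProtected k) 1 := by
  have hk1 : (0:ℝ) < (k:ℝ) - 1 := by
    have : (2:ℝ) ≤ k := by exact_mod_cast hk
    linarith
  obtain ⟨ha0, ha2⟩ := rhoStarAlpha_bounds k
  have hstar := rhoStar_lb k hk
  have hstarpos : 0 < rhoStar (lollipop k) := lt_of_lt_of_le hk1 hstar
  rw [PoF, sub_lt_sub_iff_left]
  rw [div_lt_div_iff₀ hstarpos hk1]
  nlinarith
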